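/- Let X be any Coxeter graph. If the kernel of the quotient map θ : H(X) → TL(X) is spanned as an A-module by the Kazhdan–Lusztig basis elements C'_w that it contains, then θ(C'_w) = c_w for all w ∈ W_c, i.e., X has the projection property. -/

import Mathlib

open CoxeterSystem LaurentPolynomial

noncomputable section

/-- The Laurent polynomial ring `A = ℤ[v, v⁻¹]`, with `v = T 1`. -/
abbrev LA := LaurentPolynomial ℤ

/-- `q_c = v + v⁻¹`. -/
def qc : LA := T 1 + T (-1)

/-- The subring `A⁻ = ℤ[v⁻¹]` of `A`. -/
def LAminus : Subring LA := Subring.closure {T (-1)}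

variable {B : Type*} {W : Type*} [Group W]

/-- `w` is complex: it has a reduced factorization `x₁ * w_{ss'} * x₂`, where `w_{ss'}` is the
longest element of a finite rank-2 parabolic subgroup `⟨s, s'⟩` with `s`, `s'` non-commuting
(`3 ≤ M i i'`, which also excludes infinite bonds `M i i' = 0`). -/
def CoxeterSystem.IsComplexElt {M : CoxeterMatrix B} (cs : CoxeterSystem M W) (w : W) : Prop :=
  ∃ (x₁ x₂ : W) (i i' : B), 3 ≤ M i i' ∧
    w = x₁ * cs.wordProd (CoxeterSystem.braidWord M i i') * x₂ ∧
    cs.length w = cs.length x₁ + M i i' + cs.length x₂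

/-- `w` is fully commutative, i.e. not complex; `cs.FC` plays the role of the set `W_c`. -/
def CoxeterSystem.FC {M : CoxeterMatrix B} (cs : CoxeterSystem M W) (w : W) : Prop :=
  ¬ cs.IsComplexElt w

/-- Bruhat--Chevalley order, via the subword characterization. -/
def CoxeterSystem.BruhatLE {M : CoxeterMatrix B} (cs : CoxeterSystem M W) (x w : W) : Prop :=
  ∃ ω : List B, cs.IsReduced ω ∧ cs.wordProd ω = w ∧
    ∃ κ : List B, κ.Sublist ω ∧ cs.wordProd κ = x

/-- Data of the Hecke algebra of `cs`: a free `A`-module with basis `{T_w}` (here `q = v² = T 2`)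
satisfying the defining multiplication rules. -/
structure HeckeData {M : CoxeterMatrix B} (cs : CoxeterSystem M W)
    (H : Type*) [Ring H] [Algebra LA H] where
  Tb : Module.Basis W LA H
  Tb_one : (Tb 1 : H) = 1
  Tb_mul_of_lt : ∀ (i : B) (w : W), cs.length w < cs.length (cs.simple i * w) →
    Tb (cs.simple i) * Tb w = Tb (cs.simple i * w)
  Tb_mul_of_gt : ∀ (i : B) (w : W), cs.length (cs.simple i * w) < cs.length w →
    Tb (cs.simple i) * Tb w = (T 2 : LA) • Tb (cs.simple i * w) + ((T 2 - 1 : LA)) • Tb w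

/-- The underlying set of the rank-2 parabolic subgroup `⟨s_i, s_{i'}⟩` (with `M i i'` finite),
as a finset: all products of alternating words. -/
def dihedralFinset [DecidableEq W] {M : CoxeterMatrix B} (cs : CoxeterSystem M W)
    (i i' : B) : Finset W :=
  (Finset.range (M i i' + 1)).image (fun k => cs.wordProd (CoxeterSystem.alternatingWord i i' k)) ∪
  (Finset.range (M i i' + 1)).image (fun k => cs.wordProd (CoxeterSystem.alternatingWord i' i k))

/-- The generators `Σ_{w ∈ ⟨s,s'⟩} T_w` (over adjacent pairs `(s, s')`, i.e. `3 ≤ M i i'`,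
omitting infinite bonds) of the two-sided ideal `J(X)`. -/
def heckeJGens [DecidableEq W] {M : CoxeterMatrix B} {cs : CoxeterSystem M W}
    {H : Type*} [Ring H] [Algebra LA H] (hd : HeckeData cs H) : Set H :=
  {x | ∃ i i' : B, 3 ≤ M i i' ∧ x = ∑ u ∈ dihedralFinset cs i i', hd.Tb u}

/-- The set `{v^{-ℓ(u)} t_u : u ∈ W_c}` in `TL(X)`, where `t_u = θ(T_u)`. -/
def lattSet {M : CoxeterMatrix B} (cs : CoxeterSystem M W) {H : Type*} [Ring H] [Algebra LA H]
    (hd : HeckeData cs H) {Q : Type*} [Ring Q] [Algebra LA Q] (θ : H →ₐ[LA] Q) : Set Q :=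
  {y | ∃ u : W, cs.FC u ∧ y = ((T (-1) : LA) ^ cs.length u) • θ (hd.Tb u)}

/-- The `A⁻`-lattice `L` spanned by `{v^{-ℓ(u)} t_u : u ∈ W_c}`. -/
def latt {M : CoxeterMatrix B} (cs : CoxeterSystem M W) {H : Type*} [Ring H] [Algebra LA H]
    (hd : HeckeData cs H) {Q : Type*} [Ring Q] [Algebra LA Q] (θ : H →ₐ[LA] Q) :
    Submodule LAminus Q :=
  Submodule.span LAminus (lattSet cs hd θ)

/-- The sublattice `v⁻¹L`, spanned by `{v^{-ℓ(u)-1} t_u : u ∈ W_c}`. -/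
def vinvLatt {M : CoxeterMatrix B} (cs : CoxeterSystem M W) {H : Type*} [Ring H] [Algebra LA H]
    (hd : HeckeData cs H) {Q : Type*} [Ring Q] [Algebra LA Q] (θ : H →ₐ[LA] Q) :
    Submodule LAminus Q :=
  Submodule.span LAminus
    {y | ∃ u : W, cs.FC u ∧ y = ((T (-1) : LA) ^ (cs.length u + 1)) • θ (hd.Tb u)}

/-! ### Auxiliary lemmas -/

section Aux

/-- `v⁻¹ ∈ A⁻`. -/
lemma Tneg_mem_LAminus : (T (-1) : LA) ∈ LAminus := Subring.subset_closure rfl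

/-- The subring of Laurent polynomials with no terms in positive degree. -/
def Sneg : Subring LA where
  carrier := {f : LA | ∀ n : ℤ, 0 < n → f.coeff n = 0}
  zero_mem' := by intro n _; simp
  one_mem' := by
    intro n hn
    rw [AddMonoidAlgebra.one_def, AddMonoidAlgebra.coeff_single, Finsupp.single_apply]
    simp only [ite_eq_right_iff]
    intro h; omega
  add_mem' := by
    intro a b ha hb n hn
    show (a + b).coeff n = 0
    rw [AddMonoidAlgebra.coeff_add, Finsupp.add_apply, ha n hn, hb n hn, add_zero]
  neg_mem' := by
    intro a ha n hn
    show (-a).coeff n = 0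
    rw [AddMonoidAlgebra.coeff_neg, Finsupp.neg_apply, ha n hn, neg_zero]
  mul_mem' := by
    intro a b ha hb n hn
    by_contra h
    have hmem : n ∈ (a * b).coeff.support := Finsupp.mem_support_iff.mpr h
    have := AddMonoidAlgebra.support_coeff_mul_subset a b hmem
    rw [Finset.mem_add] at this
    obtain ⟨y, hy, z, hz, hyz⟩ := this
    have hy0 : ¬ (0 < y) := fun hy' => (Finsupp.mem_support_iff.mp hy) (ha y hy')
    have hz0 : ¬ (0 < z) := fun hz' => (Finsupp.mem_support_iff.mp hz) (hb z hz')
    omega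

lemma LAminus_le_Sneg : LAminus ≤ Sneg := by
  apply Subring.closure_le.mpr
  rw [Set.singleton_subset_iff]
  intro n hn
  show (T (-1) : LA).coeff n = 0
  rw [T_apply]
  simp only [ite_eq_right_iff]
  intro h; omega

lemma vinv_mul_coeff (s : LA) (n : ℤ) : ((T (-1) : LA) * s).coeff n = s.coeff (n + 1) := by
  have h : ((T (-1) : LA) * s).coeff n = 1 * s.coeff (-(-1) + n) :=
    AddMonoidAlgebra.coeff_single_mul_apply s 1 (-1) n
  rw [h, one_mul]
  norm_num [add_comm]

/-- A Laurent polynomial in `v⁻¹ℤ[v⁻¹]` fixed by the bar involution is zero. -/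
lemma bar_fixed_eq_zero {p : LA} (hp : ∃ s ∈ LAminus, p = T (-1) * s)
    (hinv : LaurentPolynomial.invert (R := ℤ) p = p) : p = 0 := by
  obtain ⟨s, hs, rfl⟩ := hp
  have hs' := LAminus_le_Sneg hs
  have hpos : ∀ n : ℤ, 0 ≤ n → ((T (-1) : LA) * s).coeff n = 0 := by
    intro n hn
    rw [vinv_mul_coeff]
    exact hs' (n + 1) (by omega)
  ext n
  show ((T (-1) : LA) * s).coeff n = (0 : LA).coeff n
  rw [AddMonoidAlgebra.coeff_zero, Finsupp.coe_zero, Pi.zero_apply]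
  rcases le_or_gt 0 n with hn | hn
  · exact hpos n hn
  · calc ((T (-1) : LA) * s).coeff n = (LaurentPolynomial.invert (R := ℤ) ((T (-1) : LA) * s)).coeff n := by
          rw [hinv]
      _ = ((T (-1) : LA) * s).coeff (-n) := by rw [LaurentPolynomial.invert_apply]
      _ = 0 := hpos (-n) (by omega)

lemma bruhatLE_length_lt {M : CoxeterMatrix B} (cs : CoxeterSystem M W) {x w : W}
    (h : cs.BruhatLE x w) (hne : x ≠ w) : cs.length x < cs.length w := by
  obtain ⟨ω, hred, hw, κ, hsub, hx⟩ := h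
  have h1 : cs.length x ≤ κ.length := hx ▸ cs.length_wordProd_le κ
  have h2 : κ.length ≤ ω.length := hsub.length_le
  have h3 : cs.length w = ω.length := by rw [← hw]; exact hred
  refine lt_of_le_of_ne (by omega) ?_
  intro heq
  have hlen : κ.length = ω.length := by omega
  have hκω : κ = ω := hsub.eq_of_length hlen
  exact hne (by rw [← hx, hκω, hw])

end Aux

/-- Let `X` be any Coxeter graph.  If the kernel of the quotient map `θ : H(X) → TL(X)` is
spanned, as an `A`-module, by the Kazhdan--Lusztig basis elements `C'_w` which it contains,
then `θ(C'_w) = c_w` for all `w ∈ W_c` (the projection property holds). -/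
theorem projection_property_of_kernel_spanned [DecidableEq W] {M : CoxeterMatrix B}
    (cs : CoxeterSystem M W)
    {H : Type*} [Ring H] [Algebra LA H] (hd : HeckeData cs H)
    {Q : Type*} [Ring Q] [Algebra LA Q] (θ : H →ₐ[LA] Q)
    (hsurj : Function.Surjective θ)
    (hker : ∀ x : H, θ x = 0 ↔ x ∈ TwoSidedIdeal.span (heckeJGens hd))
    (barH : H ≃+* H)
    (hbar_smul : ∀ (a : LA) (x : H),
      barH (a • x) = ((LaurentPolynomial.invert (R := ℤ)) a) • barH x)
    (hbar_T : ∀ i : B, barH (hd.Tb (cs.simple i)) =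
      (T (-2) : LA) • hd.Tb (cs.simple i) + ((T (-2) - 1 : LA)) • (hd.Tb 1 : H))
    -- the Kazhdan--Lusztig basis
    (C : W → H)
    (hC_bar : ∀ w : W, barH (C w) = C w)
    (hC_tri : ∀ w : W, ∃ P : W →₀ LA, P w = 1 ∧ (∀ x ∈ P.support, cs.BruhatLE x w) ∧
      (∀ x : W, x ≠ w → ∃ p ∈ LAminus, P x = T (-1) * p) ∧
      C w = P.sum (fun x p => p • (((T (-1) : LA) ^ cs.length x) • (hd.Tb x : H))))
    (barTL : Q ≃+* Q) (hbarTL : ∀ x : H, barTL (θ x) = θ (barH x))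
    -- the IC basis of `TL(X)`
    (c : W → Q)
    (hc : ∀ w : W, cs.FC w → c w ∈ latt cs hd θ ∧ barTL (c w) = c w ∧
      c w - ((T (-1) : LA) ^ cs.length w) • θ (hd.Tb w) ∈ vinvLatt cs hd θ)
    -- the kernel of `θ` is spanned by the Kazhdan--Lusztig basis elements it contains
    (hspan : LinearMap.ker θ.toLinearMap =
      Submodule.span LA {x : H | (∃ w : W, x = C w) ∧ θ x = 0}) :
    ∀ w : W, cs.FC w → θ (C w) = c w := by
  classical
  choose P hP1 hP2 hP3 hCP using hC_tri
  have hvi : (T (-1) : LA) ∈ LAminus := Tneg_mem_LAminus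
  -- the `A⁻`-sublattice of `H` spanned by `{v⁻¹ • C y}`
  set Vs : Submodule LAminus H :=
    Submodule.span LAminus (Set.range fun y : W => (T (-1) : LA) • C y) with hVs
  -- triangularity: `v^{-ℓ(u)} T_u ≡ C_u` modulo `Vs`
  have Texp : ∀ (n : ℕ) (u : W), cs.length u < n →
      ((T (-1) : LA) ^ cs.length u) • (hd.Tb u : H) - C u ∈ Vs := by
    intro n
    induction n with
    | zero => intro u h; exact absurd h (Nat.not_lt_zero _)
    | succ n ih =>
      intro u hu
      have husupp : u ∈ (P u).support :=
        Finsupp.mem_support_iff.mpr (by rw [hP1]; exact one_ne_zero)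
      have hsum := hCP u
      rw [Finsupp.sum] at hsum
      have hsplit : C u = ((T (-1) : LA) ^ cs.length u) • (hd.Tb u : H)
          + ∑ x ∈ (P u).support.erase u,
              (P u) x • (((T (-1) : LA) ^ cs.length x) • (hd.Tb x : H)) := by
        rw [hsum, ← Finset.add_sum_erase _ _ husupp, hP1, one_smul]
      have hterm : ∀ x ∈ (P u).support.erase u,
          (P u) x • (((T (-1) : LA) ^ cs.length x) • (hd.Tb x : H)) ∈ Vs := by
        intro x hx
        have hxs := Finset.mem_of_mem_erase hx
        have hxne : x ≠ u := Finset.ne_of_mem_erase hx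
        obtain ⟨p, hp, hPx⟩ := hP3 u x hxne
        have hlt : cs.length x < cs.length u := bruhatLE_length_lt cs (hP2 u x hxs) hxne
        have hmem : ((T (-1) : LA) ^ cs.length x) • (hd.Tb x : H) - C x ∈ Vs :=
          ih x (by omega)
        have hPxm : (P u) x ∈ LAminus := by rw [hPx]; exact mul_mem hvi hp
        have h1 : (P u) x • (C x) ∈ Vs := by
          have he : (P u) x • (C x) = p • ((T (-1) : LA) • C x) := by
            rw [hPx, mul_comm, mul_smul]
          rw [he]
          exact Vs.smul_mem ⟨p, hp⟩ (Submodule.subset_span ⟨x, rfl⟩)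
        have h2 : (P u) x • (((T (-1) : LA) ^ cs.length x) • (hd.Tb x : H) - C x) ∈ Vs :=
          Vs.smul_mem ⟨(P u) x, hPxm⟩ hmem
        have he2 : (P u) x • (((T (-1) : LA) ^ cs.length x) • (hd.Tb x : H)) =
            (P u) x • (C x)
            + (P u) x • (((T (-1) : LA) ^ cs.length x) • (hd.Tb x : H) - C x) := by
          rw [← smul_add]
          congr 1
          abel
        rw [he2]
        exact Vs.add_mem h1 h2
      have heq : ((T (-1) : LA) ^ cs.length u) • (hd.Tb u : H) - C u
          = -∑ x ∈ (P u).support.erase u,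
              (P u) x • (((T (-1) : LA) ^ cs.length x) • (hd.Tb x : H)) := by
        rw [hsplit]; abel
      rw [heq]
      exact Vs.neg_mem (Submodule.sum_mem _ hterm)
  have hTexp : ∀ u : W, ((T (-1) : LA) ^ cs.length u) • (hd.Tb u : H) - C u ∈ Vs :=
    fun u => Texp (cs.length u + 1) u (by omega)
  -- linear independence of the Kazhdan--Lusztig basis
  have Cinj : ∀ g : W →₀ LA, Finsupp.linearCombination LA C g = 0 → g = 0 := by
    intro g hg
    by_contra hne
    obtain ⟨y₀, hy₀, hymax⟩ := Finset.exists_max_image g.support (fun y => cs.length y)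
      (Finsupp.support_nonempty_iff.mpr hne)
    have hterm : ∀ (x : W) (p : LA),
        hd.Tb.coord y₀ (p • (((T (-1) : LA) ^ cs.length x) • (hd.Tb x : H)))
          = if x = y₀ then p * (T (-1) : LA) ^ cs.length x else 0 := by
      intro x p
      rw [map_smul, map_smul, Module.Basis.coord_apply, Module.Basis.repr_self, smul_eq_mul, smul_eq_mul,
        Finsupp.single_apply]
      split <;> simp
    have hcoord : ∀ y : W, hd.Tb.coord y₀ (C y) = (P y) y₀ * (T (-1) : LA) ^ cs.length y₀ := by
      intro y
      rw [hCP y, map_finsuppSum, Finsupp.sum]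
      simp only [hterm]
      rw [Finset.sum_ite_eq']
      by_cases hmem : y₀ ∈ (P y).support
      · simp [hmem]
      · simp [hmem, Finsupp.notMem_support_iff.mp hmem]
    have h0 : hd.Tb.coord y₀ (Finsupp.linearCombination LA C g) = 0 := by
      rw [hg, map_zero]
    rw [Finsupp.linearCombination_apply, map_finsuppSum] at h0
    simp only [map_smul, hcoord, smul_eq_mul] at h0
    rw [Finsupp.sum] at h0
    rw [Finset.sum_eq_single_of_mem y₀ hy₀ ?_] at h0
    · rw [hP1, one_mul] at h0
      have hu : IsUnit ((T (-1) : LA) ^ cs.length y₀) := (isUnit_T (-1)).pow _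
      exact (Finsupp.mem_support_iff.mp hy₀) ((IsUnit.mul_left_eq_zero hu).mp h0)
    · intro y hy hne'
      have hP0 : (P y) y₀ = 0 := by
        by_contra hP
        have hmem : y₀ ∈ (P y).support := Finsupp.mem_support_iff.mpr hP
        have hlt := bruhatLE_length_lt cs (hP2 y y₀ hmem) hne'.symm
        have := hymax y hy
        omega
      rw [hP0, zero_mul, mul_zero]
  -- the corresponding sublattice of `Q`
  set VQ : Submodule LAminus Q :=
    Submodule.span LAminus (Set.range fun y : W => (T (-1) : LA) • θ (C y)) with hVQ
  have VQ_smul : ∀ (t : LA), t ∈ LAminus → ∀ z ∈ VQ, t • z ∈ VQ :=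
    fun t ht z hz => VQ.smul_mem ⟨t, ht⟩ hz
  have θVs : ∀ z ∈ Vs, θ z ∈ VQ := by
    intro z hz
    induction hz using Submodule.span_induction with
    | mem x hx =>
      obtain ⟨y, rfl⟩ := hx
      rw [map_smul]
      exact Submodule.subset_span ⟨y, rfl⟩
    | zero => rw [map_zero]; exact VQ.zero_mem
    | add x y _ _ hx hy => rw [map_add]; exact VQ.add_mem hx hy
    | smul t x _ hx =>
      have he : θ (t • x) = (t : LA) • θ x := map_smul θ (t : LA) x
      show θ (t • x) ∈ VQ
      rw [he]
      exact VQ.smul_mem t hx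
  have key1 : ∀ u : W, θ (C u) - ((T (-1) : LA) ^ cs.length u) • θ (hd.Tb u) ∈ VQ := by
    intro u
    have h := θVs _ (hTexp u)
    rw [map_sub, map_smul] at h
    have h' := VQ.neg_mem h
    rw [neg_sub] at h'
    exact h'
  have key2 : vinvLatt cs hd θ ≤ VQ := by
    refine Submodule.span_le.mpr ?_
    rintro y ⟨u, hu, rfl⟩
    have hpow : ((T (-1) : LA) ^ (cs.length u + 1)) • θ (hd.Tb u)
        = (T (-1) : LA) • (((T (-1) : LA) ^ cs.length u) • θ (hd.Tb u)) := by
      rw [pow_succ, mul_comm, mul_smul]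
    have hsplit : ((T (-1) : LA) ^ cs.length u) • θ (hd.Tb u)
        = θ (C u) - (θ (C u) - ((T (-1) : LA) ^ cs.length u) • θ (hd.Tb u)) := by
      rw [sub_sub_cancel]
    rw [hpow, hsplit, smul_sub]
    exact VQ.sub_mem (Submodule.subset_span ⟨u, rfl⟩)
      (VQ_smul (T (-1)) hvi _ (key1 u))
  intro w hw
  obtain ⟨hcL, hcbar, hcv⟩ := hc w hw
  have key3 : c w - ((T (-1) : LA) ^ cs.length w) • θ (hd.Tb w) ∈ VQ := key2 hcv
  have hdmem : θ (C w) - c w ∈ VQ := by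
    have h := VQ.sub_mem (key1 w) key3
    rw [sub_sub_sub_cancel_right] at h
    exact h
  have hdbar : barTL (θ (C w) - c w) = θ (C w) - c w := by
    rw [map_sub, hbarTL, hC_bar, hcbar]
  -- write the difference as the image of an `A`-combination of `C`'s
  obtain ⟨a, ha⟩ := Finsupp.mem_span_range_iff_exists_finsupp.mp hdmem
  set b : W →₀ LA := Finsupp.mapRange (fun t : LAminus => (T (-1) : LA) * (t : LA)) (by simp) a with hb
  have hbval : ∀ y : W, b y = (T (-1) : LA) * ((a y : LA)) := by
    intro y; rw [hb, Finsupp.mapRange_apply]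
  have hbmem : ∀ y : W, ∃ s ∈ LAminus, b y = (T (-1) : LA) * s :=
    fun y => ⟨(a y : LA), (a y).2, hbval y⟩
  have hq : θ (b.sum fun y p => p • C y) = θ (C w) - c w := by
    rw [← ha]
    have h1 : (b.sum fun y p => p • C y)
        = a.sum fun y t => ((T (-1) : LA) * (t : LA)) • C y :=
      Finsupp.sum_mapRange_index (by simp)
    rw [h1, map_finsuppSum, Finsupp.sum, Finsupp.sum]
    refine Finset.sum_congr rfl fun y _ => ?_
    rw [map_smul, mul_comm, mul_smul]
    rfl
  have hbarq : θ (b.sum fun y p => (LaurentPolynomial.invert (R := ℤ) p) • C y)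
      = θ (C w) - c w := by
    have h2 : barH (b.sum fun y p => p • C y)
        = b.sum fun y p => (LaurentPolynomial.invert (R := ℤ) p) • C y := by
      rw [map_finsuppSum, Finsupp.sum, Finsupp.sum]
      refine Finset.sum_congr rfl fun y _ => ?_
      rw [hbar_smul, hC_bar]
    calc θ (b.sum fun y p => (LaurentPolynomial.invert (R := ℤ) p) • C y)
        = θ (barH (b.sum fun y p => p • C y)) := by rw [h2]
      _ = barTL (θ (b.sum fun y p => p • C y)) := (hbarTL _).symm
      _ = θ (C w) - c w := by rw [hq, hdbar]
  set g : W →₀ LA := b.mapRange (fun p => p - LaurentPolynomial.invert (R := ℤ) p)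
    (by simp) with hg
  have hgker : θ (Finsupp.linearCombination LA C g) = 0 := by
    rw [Finsupp.linearCombination_apply]
    have h3 : (g.sum fun y p => p • C y)
        = (b.sum fun y p => p • C y)
          - (b.sum fun y p => (LaurentPolynomial.invert (R := ℤ) p) • C y) := by
      rw [hg, Finsupp.sum_mapRange_index (by simp), ← Finsupp.sum_sub]
      rw [Finsupp.sum, Finsupp.sum]
      refine Finset.sum_congr rfl fun y _ => ?_
      rw [sub_smul]
    rw [h3, map_sub, hq, hbarq, sub_self]
  have hker' : Finsupp.linearCombination LA C g ∈ LinearMap.ker θ.toLinearMap := by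
    rw [LinearMap.mem_ker]
    exact hgker
  rw [hspan] at hker'
  have hSeq : {x : H | (∃ w : W, x = C w) ∧ θ x = 0} = C '' {y : W | θ (C y) = 0} := by
    ext x
    constructor
    · rintro ⟨⟨y, rfl⟩, h0⟩; exact ⟨y, h0, rfl⟩
    · rintro ⟨y, h0, rfl⟩; exact ⟨⟨y, rfl⟩, h0⟩
  rw [hSeq] at hker'
  obtain ⟨l, hl, hlg⟩ := (Finsupp.mem_span_image_iff_linearCombination LA).mp hker'
  have hgl : g = l := by
    have hz : Finsupp.linearCombination LA C (g - l) = 0 := by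
      rw [map_sub, hlg, sub_self]
    exact sub_eq_zero.mp (Cinj _ hz)
  have hbzero : ∀ y : W, θ (C y) ≠ 0 → b y = 0 := by
    intro y hy
    have hly : l y = 0 := (Finsupp.mem_supported' LA l).mp hl y hy
    have hgy : b y - LaurentPolynomial.invert (R := ℤ) (b y) = 0 := by
      have : g y = 0 := by rw [hgl]; exact hly
      rw [hg, Finsupp.mapRange_apply] at this
      exact this
    exact bar_fixed_eq_zero (hbmem y) (sub_eq_zero.mp hgy).symm
  have hfinal : θ (C w) - c w = 0 := by
    rw [← hq, map_finsuppSum, Finsupp.sum]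
    apply Finset.sum_eq_zero
    intro y hy
    by_cases h0 : θ (C y) = 0
    · rw [map_smul, h0, smul_zero]
    · rw [hbzero y h0, zero_smul, map_zero]
  exact sub_eq_zero.mp hfinal
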